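/- Let G be a finite connected multigraph, s ∈ V a fixed sink, and D ∈ ℤ^V. Then D is G-parking with respect to s if and only if for every nonempty subset S ⊆ V \\ {s} there exists v ∈ S with D_v < (number of edges from v to V \\ S). -/

import Mathlib

open Finset

/-- Laplacian of a loopless multigraph given by edge multiplicities `m`. -/
def lap {V : Type*} [Fintype V] [DecidableEq V] (m : V → V → ℕ) : Matrix V V ℤ :=
  fun u v => if u = v then (∑ w, (m u w : ℤ)) else -(m u v : ℤ)

lemma lap_mulVec {V : Type*} [Fintype V] [DecidableEq V]
    (m : V → V → ℕ) (hloop : ∀ v, m v v = 0) (σ : V → ℤ) (v : V) :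
    (lap m).mulVec σ v = ∑ w, (m v w : ℤ) * (σ v - σ w) := by
  have : ∀ w, lap m v w * σ w
      = (if v = w then (∑ u, (m v u : ℤ)) else 0) * σ w - (m v w : ℤ) * σ w := by
    intro w
    by_cases h : v = w
    · subst h; simp [lap, hloop v]
    · simp [lap, h]
  simp only [Matrix.mulVec, dotProduct]
  rw [Finset.sum_congr rfl (fun w _ => this w), Finset.sum_sub_distrib]
  simp only [ite_mul, zero_mul, Finset.sum_ite_eq, Finset.mem_univ, if_true,
    mul_sub]
  rw [Finset.sum_sub_distrib, Finset.sum_mul]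

theorem stmt17 {V : Type*} [Fintype V] [DecidableEq V]
    (m : V → V → ℕ) (hsymm : ∀ u v, m u v = m v u) (hloop : ∀ v, m v v = 0)
    (hconn : (SimpleGraph.fromRel (fun u v => 0 < m u v)).Connected)
    (s : V) (D : V → ℤ) (hD : ∀ v, v ≠ s → 0 ≤ D v) :
    (¬ ∃ σ : V → ℤ, (∀ v, 0 ≤ σ v) ∧ σ s = 0 ∧ σ ≠ 0 ∧
        ∀ v, v ≠ s → 0 ≤ (D - (lap m).mulVec σ) v) ↔
      (∀ S : Finset V, S.Nonempty → s ∉ S →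
        ∃ v ∈ S, D v < ∑ u ∈ Sᶜ, (m v u : ℤ)) := by
  constructor
  · intro h S hS hsS
    by_contra hc
    push_neg at hc
    apply h
    refine ⟨fun v => if v ∈ S then 1 else 0, fun v => by positivity, by simp [hsS], ?_, ?_⟩
    · obtain ⟨v, hv⟩ := hS
      intro h0
      have := congrFun h0 v
      simp [hv] at this
    · intro v hv
      simp only [Pi.sub_apply, lap_mulVec m hloop, sub_nonneg]
      by_cases hvS : v ∈ S
      · have heq : ∀ w, (m v w : ℤ) * ((if v ∈ S then 1 else 0) - if w ∈ S then 1 else 0)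
            = if w ∈ Sᶜ then (m v w : ℤ) else 0 := by
          intro w; by_cases hw : w ∈ S <;> simp [hvS, hw]
        rw [Finset.sum_congr rfl (fun w _ => heq w), Finset.sum_ite_mem, Finset.univ_inter]
        exact hc v hvS
      · apply le_trans _ (hD v hv)
        apply Finset.sum_nonpos
        intro w _
        simp only [hvS, if_false]
        by_cases hwS : w ∈ S <;> simp [hwS] <;> positivity
  · rintro h ⟨σ, hσ0, hσs, hσne, hge⟩
    have ⟨v0, hv0⟩ : ∃ v, σ v ≠ 0 := by
      by_contra hc; push_neg at hc; exact hσne (funext hc)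
    have hv0pos : 0 < σ v0 := lt_of_le_of_ne (hσ0 v0) (Ne.symm hv0)
    set M := Finset.univ.sup' ⟨v0, Finset.mem_univ v0⟩ σ with hM
    have hMpos : 0 < M := lt_of_lt_of_le hv0pos (Finset.le_sup' σ (Finset.mem_univ v0))
    have hle : ∀ w, σ w ≤ M := fun w => Finset.le_sup' σ (Finset.mem_univ w)
    set S : Finset V := univ.filter (fun v => σ v = M) with hS
    have hSne : S.Nonempty := by
      obtain ⟨w, hw, hweq⟩ := Finset.exists_mem_eq_sup' ⟨v0, Finset.mem_univ v0⟩ σ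
      exact ⟨w, by simp [hS, hweq.symm, ← hM]⟩
    have hsS : s ∉ S := by
      simp only [hS, Finset.mem_filter, Finset.mem_univ, true_and]
      omega
    obtain ⟨v, hvS, hvlt⟩ := h S hSne hsS
    have hvs : v ≠ s := fun he => hsS (he ▸ hvS)
    have hσv : σ v = M := by simpa [hS] using hvS
    have key : ∑ u ∈ Sᶜ, (m v u : ℤ) ≤ (lap m).mulVec σ v := by
      rw [lap_mulVec m hloop]
      calc ∑ u ∈ Sᶜ, (m v u : ℤ) ≤ ∑ u ∈ Sᶜ, (m v u : ℤ) * (σ v - σ u) := by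
            apply Finset.sum_le_sum
            intro u hu
            have huM : σ u ≠ M := by simp [hS] at hu; exact hu
            have : σ u + 1 ≤ M := lt_of_le_of_ne (hle u) huM
            nlinarith [Nat.cast_nonneg (α := ℤ) (m v u)]
        _ ≤ ∑ u, (m v u : ℤ) * (σ v - σ u) := by
            apply Finset.sum_le_sum_of_subset_of_nonneg (Finset.subset_univ _)
            intro u _ _
            have := hle u
            have := hσv
            nlinarith [Nat.cast_nonneg (α := ℤ) (m v u)]
    have := hge v hvs
    simp only [Pi.sub_apply, sub_nonneg] at this
    omega
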